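/- Let (β,δ) lie in the exponential regime ℰ and let 0 < K ≤ 1. Then, as N → ∞, the Green-function occupation sum Σ_{n=1}^{⌊K N^{1−δ}⌋} G_N(n,n) is logarithmically equivalent to exp( K(2−K) N^{1−β−2δ} ), i.e. log( Σ_{n=1}^{⌊K N^{1−δ}⌋} G_N(n,n) ) / ( K(2−K) N^{1−β−2δ} ) → 1. -/

import Mathlib

open Filter Finset

namespace MullerRatchet5

/-- Per-capita upward rate of the time-rescaled best-class process:
`p_n = (1/(2m) + 1/ρ)(1 − n/N)` with `m = N^{−β}`, `ρ = 1 − N^{−δ}`. -/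
noncomputable def pr (β δ : ℝ) (N n : ℕ) : ℝ :=
  (1 / (2 * (N:ℝ)^(-β)) + 1 / (1 - (N:ℝ)^(-δ))) * (1 - (n:ℝ)/(N:ℝ))

/-- Per-capita downward rate `q_n = (1/(2m))(1 − n/N) + 1` with `m = N^{−β}`. -/
noncomputable def qr (β : ℝ) (N n : ℕ) : ℝ :=
  (1 / (2 * (N:ℝ)^(-β))) * (1 - (n:ℝ)/(N:ℝ)) + 1

/-- Green function `G_N(n₀,n) = (1/(n q_n)) Σ_{l=0}^{min(n₀,n)−1} ∏_{k=l+1}^{n−1} p_k/q_k`. -/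
noncomputable def G (β δ : ℝ) (N n₀ n : ℕ) : ℝ :=
  (1 / ((n:ℝ) * qr β N n)) * ∑ l ∈ Finset.range (min n₀ n),
    ∏ k ∈ Finset.Icc (l+1) (n-1), pr β δ N k / qr β N k

lemma exp_le_one_add {t : ℝ} (h0 : 0 ≤ t) : Real.exp (t - t^2) ≤ 1 + t := by
  have hp : (0:ℝ) < 1 + t := by linarith
  have h1 : Real.exp (t/(1+t)) ≤ 1 + t := by
    have h2 := Real.add_one_le_exp (-(t/(1+t)))
    have h4 : (1:ℝ)/(1+t) ≤ Real.exp (-(t/(1+t))) := by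
      have h3 : -(t/(1+t)) + 1 = 1/(1+t) := by field_simp; ring
      linarith [h2, h3.symm.le]
    have h5 : Real.exp (t/(1+t)) * ((1:ℝ)/(1+t)) ≤ Real.exp (t/(1+t)) * Real.exp (-(t/(1+t))) :=
      mul_le_mul_of_nonneg_left h4 (Real.exp_nonneg _)
    rw [← Real.exp_add, add_neg_cancel, Real.exp_zero] at h5
    have := mul_le_mul_of_nonneg_right h5 (le_of_lt hp)
    calc Real.exp (t/(1+t)) = Real.exp (t/(1+t)) * ((1:ℝ)/(1+t)) * (1+t) := by field_simp
      _ ≤ 1 * (1+t) := this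
      _ = 1 + t := by ring
  refine le_trans (Real.exp_le_exp.2 ?_) h1
  rw [le_div_iff₀ hp]
  nlinarith

lemma exp_le_one_sub {t : ℝ} (h0 : 0 ≤ t) (h2 : t ≤ 1/2) : Real.exp (-t - 2*t^2) ≤ 1 - t := by
  have hp : (0:ℝ) < 1 - t := by linarith
  have h1 : Real.exp (-(t/(1-t))) ≤ 1 - t := by
    have hh := Real.add_one_le_exp (t/(1-t))
    have h4 : (1:ℝ)/(1-t) ≤ Real.exp (t/(1-t)) := by
      have h3 : t/(1-t) + 1 = 1/(1-t) := by field_simp; ring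
      linarith [hh, h3.symm.le]
    have h5 : Real.exp (-(t/(1-t))) * ((1:ℝ)/(1-t)) ≤ Real.exp (-(t/(1-t))) * Real.exp (t/(1-t)) :=
      mul_le_mul_of_nonneg_left h4 (Real.exp_nonneg _)
    rw [← Real.exp_add, neg_add_cancel, Real.exp_zero] at h5
    have := mul_le_mul_of_nonneg_right h5 (le_of_lt hp)
    calc Real.exp (-(t/(1-t))) = Real.exp (-(t/(1-t))) * ((1:ℝ)/(1-t)) * (1-t) := by field_simp
      _ ≤ 1 * (1-t) := this
      _ = 1 - t := by ring
  refine le_trans (Real.exp_le_exp.2 ?_) h1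
  have : t/(1-t) ≤ t + 2*t^2 := by
    rw [div_le_iff₀ hp]; nlinarith
  linarith

lemma sum_Icc_cast (m : ℕ) : ∑ k ∈ Finset.Icc 1 m, (k:ℝ) = m*(m+1)/2 := by
  induction m with
  | zero => simp
  | succ n ih =>
      rw [Finset.sum_Icc_succ_top (by omega : 1 ≤ n+1), ih]
      push_cast
      ring

noncomputable def aN (β : ℝ) (N : ℕ) : ℝ := (N:ℝ)^(-β)
noncomputable def eN (δ : ℝ) (N : ℕ) : ℝ := (N:ℝ)^(-δ)
noncomputable def bN (β δ : ℝ) (N : ℕ) : ℝ :=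
  2*aN β N*(eN δ N/(1-eN δ N))/(1+2*aN β N)
noncomputable def cN (β : ℝ) (N : ℕ) : ℝ := 2*aN β N/((N:ℝ)*(1+2*aN β N))
noncomputable def c2N (β δ : ℝ) (N : ℕ) : ℝ :=
  2*aN β N*(1+2*eN δ N)/((N:ℝ)*(1+2*aN β N - eN δ N))

lemma ratio_alg (a e x : ℝ) (ha : 0 < a) (he : e < 1) (hx : x < 1) :
  ((1/(2*a) + 1/(1-e)) * (1-x)) / ((1/(2*a))*(1-x) + 1)
    = (1 + 2*a*(e/(1-e))/(1+2*a)) * ((1+2*a)*(1-x)/((1-x)+2*a)) := by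
  have h1 : (0:ℝ) < 1 - e := by linarith
  have h2 : (0:ℝ) < 1 - x := by linarith
  have hq : 0 < (1/(2*a))*(1-x)+1 := by positivity
  have h3 : (0:ℝ) < 1 - x + 2*a := by linarith
  have h4 : (0:ℝ) < 1 + 2*a := by linarith
  rw [div_eq_iff (ne_of_gt hq)]
  field_simp
  ring

section perk
variable {β δ : ℝ} {N k : ℕ}

lemma aN_pos (hN : 0 < N) : 0 < aN β N :=
  Real.rpow_pos_of_pos (by exact_mod_cast hN) _

lemma eN_pos (hN : 0 < N) : 0 < eN δ N :=
  Real.rpow_pos_of_pos (by exact_mod_cast hN) _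

lemma one_le_qr (hN : 0 < N) (hn : (k:ℝ) ≤ N) : 1 ≤ qr β N k := by
  have ha := aN_pos (β := β) hN
  have hx : (k:ℝ)/(N:ℝ) ≤ 1 := by
    rw [div_le_one (by exact_mod_cast hN)]; exact hn
  have h1 : 0 ≤ (1 / (2 * (N:ℝ)^(-β))) * (1 - (k:ℝ)/(N:ℝ)) := by
    apply mul_nonneg
    · positivity
    · linarith
  unfold qr; linarith

lemma bN_nonneg (hN : 0 < N) (he2 : eN δ N ≤ 1/2) : 0 ≤ bN β δ N := by
  have ha := aN_pos (β := β) hN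
  have he := eN_pos (δ := δ) hN
  unfold bN
  have h2 : (0:ℝ) < 1 - eN δ N := by linarith
  positivity

/-- The key algebraic identity for the ratio. -/
lemma ratio_eq (hN : 0 < N) (he2 : eN δ N ≤ 1/2) (hx : (k:ℝ)/(N:ℝ) ≤ eN δ N) :
    pr β δ N k / qr β N k
      = (1 + bN β δ N) *
        ((1 + 2*aN β N) * (1 - (k:ℝ)/(N:ℝ)) / ((1 - (k:ℝ)/(N:ℝ)) + 2*aN β N)) := by
  have ha := aN_pos (β := β) hN
  have he := eN_pos (δ := δ) hN
  have hx1 : (k:ℝ)/(N:ℝ) < 1 := lt_of_le_of_lt (le_trans hx he2) (by norm_num)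
  have he1 : eN δ N < 1 := lt_of_le_of_lt he2 (by norm_num)
  exact ratio_alg (aN β N) (eN δ N) ((k:ℝ)/(N:ℝ)) ha he1 hx1

lemma ratio_pos (hN : 0 < N) (he2 : eN δ N ≤ 1/2) (hx : (k:ℝ)/(N:ℝ) ≤ eN δ N) :
    0 < pr β δ N k / qr β N k := by
  rw [ratio_eq hN he2 hx]
  have ha := aN_pos (β := β) hN
  have he := eN_pos (δ := δ) hN
  have hb := bN_nonneg (β := β) hN he2
  have hx1 : (k:ℝ)/(N:ℝ) < 1 := lt_of_le_of_lt (le_trans hx he2) (by norm_num)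
  have h2 : (0:ℝ) < 1 - (k:ℝ)/(N:ℝ) := by linarith
  have h3 : (0:ℝ) < 1 - (k:ℝ)/(N:ℝ) + 2*aN β N := by linarith
  positivity

lemma ratio_le_exp (hN : 0 < N) (he2 : eN δ N ≤ 1/2) (hx : (k:ℝ)/(N:ℝ) ≤ eN δ N) :
    pr β δ N k / qr β N k ≤ Real.exp (bN β δ N - cN β N * k) := by
  have ha := aN_pos (β := β) hN
  have he := eN_pos (δ := δ) hN
  have hb := bN_nonneg (β := β) hN he2
  have hNR : (0:ℝ) < N := by exact_mod_cast hN
  set x := (k:ℝ)/(N:ℝ) with hxdef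
  have hx0 : 0 ≤ x := by positivity
  have hx1 : x < 1 := lt_of_le_of_lt (le_trans hx he2) (by norm_num)
  have h2 : (0:ℝ) < 1 - x := by linarith
  have h3 : (0:ℝ) < 1 - x + 2*aN β N := by linarith
  have h4 : (0:ℝ) < 1 + 2*aN β N := by linarith
  rw [ratio_eq hN he2 hx]
  have hck : cN β N * k = 2*aN β N*x/(1+2*aN β N) := by
    unfold cN
    rw [hxdef]
    field_simp
  have hf1 : (1 + 2*aN β N) * (1 - x) / ((1 - x) + 2*aN β N)
      ≤ 1 - 2*aN β N*x/(1+2*aN β N) := by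
    rw [div_le_iff₀ (by linarith)]
    have key : (1 - 2*aN β N*x/(1+2*aN β N)) * ((1-x) + 2*aN β N) - (1 + 2*aN β N) * (1 - x)
        = 2*aN β N*x^2/(1+2*aN β N) := by
      field_simp
      ring
    have pos : 0 ≤ 2*aN β N*x^2/(1+2*aN β N) := by positivity
    linarith [key, pos]
  have hf2 : 1 - 2*aN β N*x/(1+2*aN β N) ≤ Real.exp (-(2*aN β N*x/(1+2*aN β N))) := by
    have := Real.add_one_le_exp (-(2*aN β N*x/(1+2*aN β N)))
    linarith
  have hf1' : 0 ≤ (1 + 2*aN β N) * (1 - x) / ((1 - x) + 2*aN β N) := by positivity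
  have hb' : 1 + bN β δ N ≤ Real.exp (bN β δ N) := by
    have := Real.add_one_le_exp (bN β δ N)
    linarith
  calc (1 + bN β δ N) * ((1 + 2*aN β N) * (1 - x) / ((1 - x) + 2*aN β N))
      ≤ Real.exp (bN β δ N) * Real.exp (-(2*aN β N*x/(1+2*aN β N))) := by
        apply mul_le_mul hb' (le_trans hf1 hf2) hf1' (Real.exp_nonneg _)
    _ = Real.exp (bN β δ N - cN β N * k) := by
        rw [← Real.exp_add, hck]; ring_nf

lemma exp_le_ratio (hN : 0 < N) (he2 : eN δ N ≤ 1/2) (hx : (k:ℝ)/(N:ℝ) ≤ eN δ N) :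
    Real.exp ((bN β δ N - (bN β δ N)^2) - c2N β δ N * k) ≤ pr β δ N k / qr β N k := by
  have ha := aN_pos (β := β) hN
  have he := eN_pos (δ := δ) hN
  have hb := bN_nonneg (β := β) hN he2
  have hNR : (0:ℝ) < N := by exact_mod_cast hN
  set a := aN β N with hadef
  set e := eN δ N with hedef
  set x := (k:ℝ)/(N:ℝ) with hxdef
  have hx0 : 0 ≤ x := by positivity
  have hx1 : x < 1 := lt_of_le_of_lt (le_trans hx he2) (by norm_num)
  have h2 : (0:ℝ) < 1 - x := by linarith
  have h3 : (0:ℝ) < 1 - x + 2*a := by linarith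
  have h4 : (0:ℝ) < 1 + 2*a := by linarith
  have h5 : (0:ℝ) < 1 + 2*a - e := by linarith
  rw [ratio_eq hN he2 hx]
  set v := 2*a*x/((1-x)+2*a) with hvdef
  have hfeq : (1 + 2*a) * (1 - x) / ((1 - x) + 2*a) = 1 - v := by
    rw [hvdef]; field_simp; ring
  have hv0 : 0 ≤ v := by positivity
  have hve : v ≤ e := by
    rw [hvdef, div_le_iff₀ h3]
    have : 2*a*x ≤ 2*a*e := by nlinarith
    nlinarith
  have hv2 : v ≤ 1/2 := le_trans hve he2
  -- v*(1+2*e) ≤ c2N * k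
  have hvc : v + 2*v^2 ≤ c2N β δ N * k := by
    have hc2k : c2N β δ N * k = 2*a*(1+2*e)*x/(1+2*a-e) := by
      unfold c2N
      rw [← hadef, ← hedef, hxdef]
      field_simp
    have hv1 : v ≤ 2*a*x/(1+2*a-e) := by
      rw [hvdef]
      apply div_le_div_of_nonneg_left (by positivity) h5 (by linarith [hx])
    have : v + 2*v^2 ≤ v*(1+2*e) := by nlinarith
    calc v + 2*v^2 ≤ v*(1+2*e) := this
      _ ≤ (2*a*x/(1+2*a-e))*(1+2*e) := by
          apply mul_le_mul_of_nonneg_right hv1 (by linarith)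
      _ = 2*a*(1+2*e)*x/(1+2*a-e) := by ring
      _ = c2N β δ N * k := hc2k.symm
  have hexp1 : Real.exp (bN β δ N - (bN β δ N)^2) ≤ 1 + bN β δ N := exp_le_one_add hb
  have hexp2 : Real.exp (-(c2N β δ N * k)) ≤ 1 - v := by
    calc Real.exp (-(c2N β δ N * k)) ≤ Real.exp (-v - 2*v^2) := by
          apply Real.exp_le_exp.2; linarith
      _ ≤ 1 - v := exp_le_one_sub hv0 hv2
  calc Real.exp ((bN β δ N - (bN β δ N)^2) - c2N β δ N * k)
      = Real.exp (bN β δ N - (bN β δ N)^2) * Real.exp (-(c2N β δ N * k)) := by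
        rw [← Real.exp_add]; ring_nf
    _ ≤ (1 + bN β δ N) * (1 - v) := by
        apply mul_le_mul hexp1 hexp2 (Real.exp_nonneg _) (by linarith)
    _ = (1 + bN β δ N) * ((1 + 2*a) * (1 - x) / ((1 - x) + 2*a)) := by rw [hfeq]

end perk

noncomputable def MN (δ K : ℝ) (N : ℕ) : ℕ := ⌊K * (N:ℝ)^(1-δ)⌋₊

section sums
variable {β δ K : ℝ} {N : ℕ}

/-- `M/N ≤ e` when `K ≤ 1`. -/
lemma MN_div_le (hN : 0 < N) (hK0 : 0 ≤ K) (hK1 : K ≤ 1) :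
    ((MN δ K N : ℝ))/(N:ℝ) ≤ eN δ N := by
  have hNR : (0:ℝ) < N := by exact_mod_cast hN
  have h1 : ((MN δ K N : ℝ)) ≤ K * (N:ℝ)^(1-δ) := Nat.floor_le (by positivity)
  have h2 : K * (N:ℝ)^(1-δ) ≤ (N:ℝ)^(1-δ) := by
    nlinarith [Real.rpow_pos_of_pos hNR (1-δ)]
  have h3 : eN δ N * N = (N:ℝ)^(1-δ) := by
    unfold eN
    rw [show (1:ℝ)-δ = -δ + 1 by ring, Real.rpow_add hNR, Real.rpow_one]
  rw [div_le_iff₀ hNR]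
  calc ((MN δ K N : ℝ)) ≤ (N:ℝ)^(1-δ) := le_trans h1 h2
    _ = eN δ N * N := h3.symm

lemma cN_mul_le_bN (hN : 0 < N) (he2 : eN δ N ≤ 1/2) {k : ℕ}
    (hx : (k:ℝ)/(N:ℝ) ≤ eN δ N) : cN β N * k ≤ bN β δ N := by
  have ha := aN_pos (β := β) hN
  have he := eN_pos (δ := δ) hN
  have hNR : (0:ℝ) < N := by exact_mod_cast hN
  have h2 : (0:ℝ) < 1 - eN δ N := by linarith
  have h4 : (0:ℝ) < 1 + 2*aN β N := by linarith
  have hck : cN β N * k = 2*aN β N*((k:ℝ)/(N:ℝ))/(1+2*aN β N) := by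
    unfold cN; field_simp
  rw [hck]
  unfold bN
  have hxe : (k:ℝ)/(N:ℝ) ≤ eN δ N/(1-eN δ N) := by
    refine le_trans hx ?_
    rw [le_div_iff₀ h2]
    nlinarith
  gcongr

lemma ratio_facts (hN : 0 < N) (he2 : eN δ N ≤ 1/2) (hK0 : 0 ≤ K) (hK1 : K ≤ 1)
    (k : ℕ) (hk : k ≤ MN δ K N) : ((k:ℝ))/(N:ℝ) ≤ eN δ N := by
  have hNR : (0:ℝ) < N := by exact_mod_cast hN
  refine le_trans ?_ (MN_div_le hN hK0 hK1)
  gcongr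

/-- Every inner product is bounded by `exp` of the extremal sum. -/
lemma prod_le_expEE (hN : 0 < N) (he2 : eN δ N ≤ 1/2) (hK0 : 0 ≤ K) (hK1 : K ≤ 1)
    {l n : ℕ} (hn : n ≤ MN δ K N) :
    ∏ k ∈ Finset.Icc (l+1) (n-1), pr β δ N k / qr β N k
      ≤ Real.exp (∑ k ∈ Finset.Icc 1 (MN δ K N - 1), (bN β δ N - cN β N * k)) := by
  have step1 : ∏ k ∈ Finset.Icc (l+1) (n-1), pr β δ N k / qr β N k
      ≤ ∏ k ∈ Finset.Icc (l+1) (n-1), Real.exp (bN β δ N - cN β N * k) := by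
    apply Finset.prod_le_prod
    · intro k hk
      rw [Finset.mem_Icc] at hk
      exact le_of_lt (ratio_pos hN he2 (ratio_facts hN he2 hK0 hK1 k (by omega)))
    · intro k hk
      rw [Finset.mem_Icc] at hk
      exact ratio_le_exp hN he2 (ratio_facts hN he2 hK0 hK1 k (by omega))
  rw [← Real.exp_sum] at step1
  refine le_trans step1 (Real.exp_le_exp.2 ?_)
  apply Finset.sum_le_sum_of_subset_of_nonneg
  · apply Finset.Icc_subset_Icc (by omega) (by omega)
  · intro k hk _
    rw [Finset.mem_Icc] at hk
    have := cN_mul_le_bN (β := β) hN he2 (ratio_facts hN he2 hK0 hK1 k (by omega))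
    linarith

lemma G_nonneg (hN : 0 < N) (he2 : eN δ N ≤ 1/2) (hK0 : 0 ≤ K) (hK1 : K ≤ 1)
    {n : ℕ} (hn1 : 1 ≤ n) (hn : n ≤ MN δ K N) : 0 ≤ G β δ N n n := by
  have hNR : (0:ℝ) < N := by exact_mod_cast hN
  have hq : 1 ≤ qr β N n := by
    apply one_le_qr hN
    have h := ratio_facts (δ := δ) (K := K) hN he2 hK0 hK1 n hn
    rw [div_le_iff₀ hNR] at h
    nlinarith
  unfold G
  apply mul_nonneg
  · have : (0:ℝ) < n := by exact_mod_cast hn1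
    positivity
  · apply Finset.sum_nonneg
    intro l hl
    apply Finset.prod_nonneg
    intro k hk
    rw [Finset.mem_Icc] at hk
    exact le_of_lt (ratio_pos hN he2 (ratio_facts hN he2 hK0 hK1 k (by omega)))

lemma G_le_expEE (hN : 0 < N) (he2 : eN δ N ≤ 1/2) (hK0 : 0 ≤ K) (hK1 : K ≤ 1)
    {n : ℕ} (hn1 : 1 ≤ n) (hn : n ≤ MN δ K N) :
    G β δ N n n ≤ Real.exp (∑ k ∈ Finset.Icc 1 (MN δ K N - 1), (bN β δ N - cN β N * k)) := by
  have hNR : (0:ℝ) < N := by exact_mod_cast hN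
  have hnR : (0:ℝ) < n := by exact_mod_cast hn1
  have hq : 1 ≤ qr β N n := by
    apply one_le_qr hN
    have h := ratio_facts (δ := δ) (K := K) hN he2 hK0 hK1 n hn
    rw [div_le_iff₀ hNR] at h
    nlinarith
  have hq0 : 0 < qr β N n := by linarith
  set E := ∑ k ∈ Finset.Icc 1 (MN δ K N - 1), (bN β δ N - cN β N * k) with hE
  have hsum : ∑ l ∈ Finset.range (min n n),
      ∏ k ∈ Finset.Icc (l+1) (n-1), pr β δ N k / qr β N k ≤ n * Real.exp E := by
    rw [min_self]
    calc ∑ l ∈ Finset.range n, ∏ k ∈ Finset.Icc (l+1) (n-1), pr β δ N k / qr β N k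
        ≤ (Finset.range n).card • Real.exp E := by
          apply Finset.sum_le_card_nsmul
          intro l _
          exact prod_le_expEE hN he2 hK0 hK1 hn
      _ = n * Real.exp E := by rw [Finset.card_range, nsmul_eq_mul]
  unfold G
  calc (1 / ((n:ℝ) * qr β N n)) * ∑ l ∈ Finset.range (min n n),
        ∏ k ∈ Finset.Icc (l+1) (n-1), pr β δ N k / qr β N k
      ≤ (1 / ((n:ℝ) * qr β N n)) * ((n:ℝ) * Real.exp E) := by
        apply mul_le_mul_of_nonneg_left hsum (by positivity)
    _ = Real.exp E / qr β N n := by field_simp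
    _ ≤ Real.exp E := by
        rw [div_le_iff₀ hq0]
        nlinarith [Real.exp_pos E]

lemma sum_G_le (hN : 0 < N) (he2 : eN δ N ≤ 1/2) (hK0 : 0 ≤ K) (hK1 : K ≤ 1) :
    ∑ n ∈ Finset.Icc 1 (MN δ K N), G β δ N n n
      ≤ (MN δ K N : ℝ) * Real.exp (∑ k ∈ Finset.Icc 1 (MN δ K N - 1), (bN β δ N - cN β N * k)) := by
  calc ∑ n ∈ Finset.Icc 1 (MN δ K N), G β δ N n n
      ≤ (Finset.Icc 1 (MN δ K N)).card
          • Real.exp (∑ k ∈ Finset.Icc 1 (MN δ K N - 1), (bN β δ N - cN β N * k)) := by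
        apply Finset.sum_le_card_nsmul
        intro n hn
        rw [Finset.mem_Icc] at hn
        exact G_le_expEE hN he2 hK0 hK1 hn.1 hn.2
    _ = (MN δ K N : ℝ) * Real.exp (∑ k ∈ Finset.Icc 1 (MN δ K N - 1), (bN β δ N - cN β N * k)) := by
        rw [Nat.card_Icc, nsmul_eq_mul]
        norm_num

lemma le_sum_G (hN : 0 < N) (he2 : eN δ N ≤ 1/2) (hK0 : 0 ≤ K) (hK1 : K ≤ 1)
    (hM1 : 1 ≤ MN δ K N) :
    Real.exp (∑ k ∈ Finset.Icc 1 (MN δ K N - 1), ((bN β δ N - (bN β δ N)^2) - c2N β δ N * k))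
        / ((MN δ K N : ℝ) * qr β N (MN δ K N))
      ≤ ∑ n ∈ Finset.Icc 1 (MN δ K N), G β δ N n n := by
  have hNR : (0:ℝ) < N := by exact_mod_cast hN
  set M := MN δ K N with hM
  have hMR : (0:ℝ) < M := by exact_mod_cast hM1
  have hq : 1 ≤ qr β N M := by
    apply one_le_qr hN
    have h := MN_div_le (δ := δ) (K := K) hN hK0 hK1
    rw [div_le_iff₀ hNR] at h
    nlinarith
  have hq0 : 0 < qr β N M := by linarith
  set F := ∑ k ∈ Finset.Icc 1 (M - 1), ((bN β δ N - (bN β δ N)^2) - c2N β δ N * k) with hF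
  have step1 : Real.exp F ≤ ∏ k ∈ Finset.Icc 1 (M-1), pr β δ N k / qr β N k := by
    rw [hF, Real.exp_sum]
    apply Finset.prod_le_prod
    · intro k _; exact Real.exp_nonneg _
    · intro k hk
      rw [Finset.mem_Icc] at hk
      exact exp_le_ratio hN he2 (ratio_facts hN he2 hK0 hK1 k (by omega))
  have step2 : Real.exp F / ((M:ℝ) * qr β N M) ≤ G β δ N M M := by
    unfold G
    rw [min_self, div_eq_mul_one_div, mul_comm]
    apply mul_le_mul_of_nonneg_left ?_ (by positivity)
    calc Real.exp F ≤ ∏ k ∈ Finset.Icc 1 (M-1), pr β δ N k / qr β N k := step1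
      _ = ∏ k ∈ Finset.Icc (0+1) (M-1), pr β δ N k / qr β N k := by norm_num
      _ ≤ ∑ l ∈ Finset.range M, ∏ k ∈ Finset.Icc (l+1) (M-1), pr β δ N k / qr β N k := by
          apply Finset.single_le_sum (f := fun l => ∏ k ∈ Finset.Icc (l+1) (M-1), pr β δ N k / qr β N k)
          · intro l _
            apply Finset.prod_nonneg
            intro k hk
            rw [Finset.mem_Icc] at hk
            exact le_of_lt (ratio_pos hN he2 (ratio_facts hN he2 hK0 hK1 k (by omega)))
          · exact Finset.mem_range.2 hM1
  refine le_trans step2 ?_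
  apply Finset.single_le_sum (f := fun n => G β δ N n n)
  · intro n hn
    rw [Finset.mem_Icc] at hn
    exact G_nonneg hN he2 hK0 hK1 hn.1 hn.2
  · exact Finset.mem_Icc.2 ⟨hM1, le_refl M⟩

end sums

noncomputable def TT (β δ : ℝ) (N : ℕ) : ℝ := (N:ℝ)^(1-β-2*δ)

section limits
variable {β δ K : ℝ}

lemma tendsto_aN (hβ0 : 0 < β) : Tendsto (fun N : ℕ => aN β N) atTop (nhds 0) :=
  (tendsto_rpow_neg_atTop hβ0).comp tendsto_natCast_atTop_atTop

lemma tendsto_eN (hδ0 : 0 < δ) : Tendsto (fun N : ℕ => eN δ N) atTop (nhds 0) :=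
  (tendsto_rpow_neg_atTop hδ0).comp tendsto_natCast_atTop_atTop

lemma tendsto_psi (hδ1 : δ < 1) : Tendsto (fun N : ℕ => (N:ℝ)^(δ-1)) atTop (nhds 0) := by
  have h := (tendsto_rpow_neg_atTop (show 0 < 1-δ by linarith)).comp
    (tendsto_natCast_atTop_atTop (R := ℝ))
  convert h using 2 with N
  simp only [Function.comp_apply]
  congr 1
  ring

lemma tendsto_phi (hδ0 : 0 < δ) (hδ1 : δ < 1) (hK0 : 0 < K) :
    Tendsto (fun N : ℕ => (MN δ K N : ℝ)/(N:ℝ)^(1-δ)) atTop (nhds K) := by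
  have t_psi := tendsto_psi (δ := δ) hδ1
  have tlow : Tendsto (fun N : ℕ => K - (N:ℝ)^(δ-1)) atTop (nhds K) := by
    simpa using tendsto_const_nhds.sub t_psi
  apply tendsto_of_tendsto_of_tendsto_of_le_of_le' tlow tendsto_const_nhds
  · filter_upwards [eventually_ge_atTop 1] with N hN1
    have hNR : (0:ℝ) < N := by exact_mod_cast hN1
    have hP : (0:ℝ) < (N:ℝ)^(1-δ) := Real.rpow_pos_of_pos hNR _
    have hψ : (N:ℝ)^(δ-1) = ((N:ℝ)^(1-δ))⁻¹ := by
      rw [← Real.rpow_neg (le_of_lt hNR)]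
      congr 1; ring
    have hfl := Nat.sub_one_lt_floor (K * (N:ℝ)^(1-δ))
    rw [le_div_iff₀ hP]
    have hψP : (N:ℝ)^(δ-1) * (N:ℝ)^(1-δ) = 1 := by
      rw [hψ]; field_simp
    unfold MN
    nlinarith [hfl]
  · filter_upwards [eventually_ge_atTop 1] with N hN1
    have hNR : (0:ℝ) < N := by exact_mod_cast hN1
    have hP : (0:ℝ) < (N:ℝ)^(1-δ) := Real.rpow_pos_of_pos hNR _
    rw [div_le_iff₀ hP]
    calc (MN δ K N : ℝ) ≤ K * (N:ℝ)^(1-δ) := Nat.floor_le (by positivity)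
      _ = K * (N:ℝ)^(1-δ) := rfl

lemma tendsto_logN_div_TT (hγ : 0 < 1-β-2*δ) :
    Tendsto (fun N : ℕ => Real.log N / TT β δ N) atTop (nhds 0) :=
  ((isLittleO_log_rpow_atTop hγ).tendsto_div_nhds_zero).comp tendsto_natCast_atTop_atTop

lemma tendsto_bN (hβ0 : 0 < β) (hδ0 : 0 < δ) :
    Tendsto (fun N : ℕ => bN β δ N) atTop (nhds 0) := by
  have ta := tendsto_aN (β := β) hβ0
  have te := tendsto_eN (δ := δ) hδ0
  have h : Tendsto (fun N : ℕ => 2*aN β N*(eN δ N/(1-eN δ N))/(1+2*aN β N)) atTop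
      (nhds (2*0*(0/(1-0))/(1+2*0))) := by
    apply Tendsto.div
    · exact (ta.const_mul 2).mul (te.div (tendsto_const_nhds.sub te) (by norm_num))
    · exact tendsto_const_nhds.add (ta.const_mul 2)
    · norm_num
  rw [show (2:ℝ)*0*(0/(1-0))/(1+2*0) = 0 by norm_num] at h
  exact h

lemma TT_pos {N : ℕ} (hN : 0 < N) : 0 < TT β δ N :=
  Real.rpow_pos_of_pos (by exact_mod_cast hN) _

/-- identity: `(M-1)·b/T = 2(M/N^{1-δ} - N^{δ-1})/((1-e)(1+2a))`. -/
lemma comp1_id (hδ0 : 0 < δ) {N : ℕ} (hN : 0 < N) (he1 : eN δ N < 1) :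
    ((MN δ K N : ℝ)-1) * bN β δ N / TT β δ N
      = 2*((MN δ K N : ℝ)/(N:ℝ)^(1-δ) - (N:ℝ)^(δ-1))/((1-eN δ N)*(1+2*aN β N)) := by
  have hNR : (0:ℝ) < N := by exact_mod_cast hN
  have ha := aN_pos (β := β) hN
  have he := eN_pos (δ := δ) hN
  have hP : (0:ℝ) < (N:ℝ)^(1-δ) := Real.rpow_pos_of_pos hNR _
  have hT : TT β δ N = aN β N * eN δ N * (N:ℝ)^(1-δ) := by
    unfold TT aN eN
    rw [← Real.rpow_add hNR, ← Real.rpow_add hNR]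
    congr 1; ring
  have hψ : (N:ℝ)^(δ-1) = ((N:ℝ)^(1-δ))⁻¹ := by
    rw [← Real.rpow_neg (le_of_lt hNR)]; congr 1; ring
  rw [hT, hψ]
  unfold bN
  have h2 : (0:ℝ) < 1 - eN δ N := by linarith
  have h4 : (0:ℝ) < 1 + 2*aN β N := by linarith
  field_simp

lemma comp2_id {N : ℕ} (hN : 0 < N) :
    cN β N * (((MN δ K N : ℝ)-1) * (MN δ K N : ℝ)/2) / TT β δ N
      = ((MN δ K N : ℝ)/(N:ℝ)^(1-δ) - (N:ℝ)^(δ-1)) * ((MN δ K N : ℝ)/(N:ℝ)^(1-δ))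
          / (1+2*aN β N) := by
  have hNR : (0:ℝ) < N := by exact_mod_cast hN
  have ha := aN_pos (β := β) hN
  have hP : (0:ℝ) < (N:ℝ)^(1-δ) := Real.rpow_pos_of_pos hNR _
  have hT := TT_pos (β := β) (δ := δ) hN
  have hψ : (N:ℝ)^(δ-1) = ((N:ℝ)^(1-δ))⁻¹ := by
    rw [← Real.rpow_neg (le_of_lt hNR)]; congr 1; ring
  have h4 : (0:ℝ) < 1 + 2*aN β N := by linarith
  have hkey : aN β N * ((N:ℝ)^((1:ℝ)-δ))^2 = (N:ℝ) * TT β δ N := by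
    unfold TT aN
    have e1 : ((N:ℝ)^((1:ℝ)-δ))^2 = (N:ℝ)^(((1:ℝ)-δ)*2) := by
      rw [← Real.rpow_natCast ((N:ℝ)^((1:ℝ)-δ)) 2, ← Real.rpow_mul (le_of_lt hNR)]
      norm_num
    rw [e1, ← Real.rpow_add hNR, show -β + ((1:ℝ)-δ)*2 = 1 + (1-β-2*δ) by ring,
      Real.rpow_add hNR, Real.rpow_one]
  have hkey' : aN β N * ((N:ℝ)^((1:ℝ)-δ) * (N:ℝ)^((1:ℝ)-δ)) = (N:ℝ) * TT β δ N := by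
    nlinarith [hkey]
  unfold cN
  rw [hψ]
  field_simp
  linear_combination ((MN δ K N : ℝ)^2 - (MN δ K N : ℝ)) * hkey


lemma c2N_eq {N : ℕ} (hN : 0 < N) (he2 : eN δ N ≤ 1/2) :
    c2N β δ N = cN β N * ((1+2*eN δ N)*(1+2*aN β N)/(1+2*aN β N - eN δ N)) := by
  have hNR : (0:ℝ) < N := by exact_mod_cast hN
  have ha := aN_pos (β := β) hN
  have he := eN_pos (δ := δ) hN
  have h4 : (0:ℝ) < 1 + 2*aN β N := by linarith
  have h5 : (0:ℝ) < 1 + 2*aN β N - eN δ N := by linarith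
  unfold c2N cN
  field_simp

lemma ev_eN_lt {c : ℝ} (hδ0 : 0 < δ) (hc : 0 < c) : ∀ᶠ N : ℕ in atTop, eN δ N < c :=
  (tendsto_eN hδ0).eventually (gt_mem_nhds hc)

lemma tendsto_comp1 (hβ0 : 0 < β) (hδ0 : 0 < δ) (hδ1 : δ < 1) (hK0 : 0 < K) :
    Tendsto (fun N : ℕ => ((MN δ K N : ℝ)-1) * bN β δ N / TT β δ N) atTop (nhds (2*K)) := by
  have tphi := tendsto_phi (K := K) hδ0 hδ1 hK0
  have tpsi := tendsto_psi (δ := δ) hδ1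
  have ta := tendsto_aN (β := β) hβ0
  have te := tendsto_eN (δ := δ) hδ0
  have hrhs : Tendsto (fun N : ℕ =>
      2*((MN δ K N : ℝ)/(N:ℝ)^(1-δ) - (N:ℝ)^(δ-1))/((1-eN δ N)*(1+2*aN β N)))
      atTop (nhds (2*(K-0)/((1-0)*(1+2*0)))) := by
    apply Tendsto.div (((tphi.sub tpsi)).const_mul 2)
      (Tendsto.mul (tendsto_const_nhds.sub te) (tendsto_const_nhds.add (ta.const_mul 2)))
      (by norm_num)
  rw [show 2*(K-0)/((1-0)*(1+2*0)) = 2*K by norm_num] at hrhs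
  apply hrhs.congr'
  filter_upwards [eventually_ge_atTop 1, ev_eN_lt (δ := δ) hδ0 one_pos] with N h1 h2
  exact (comp1_id hδ0 (by omega) h2).symm

lemma tendsto_comp2 (hβ0 : 0 < β) (hδ0 : 0 < δ) (hδ1 : δ < 1) (hK0 : 0 < K) :
    Tendsto (fun N : ℕ => cN β N * (((MN δ K N : ℝ)-1) * (MN δ K N : ℝ)/2) / TT β δ N)
      atTop (nhds (K*K)) := by
  have tphi := tendsto_phi (K := K) hδ0 hδ1 hK0
  have tpsi := tendsto_psi (δ := δ) hδ1
  have ta := tendsto_aN (β := β) hβ0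
  have hrhs : Tendsto (fun N : ℕ =>
      ((MN δ K N : ℝ)/(N:ℝ)^(1-δ) - (N:ℝ)^(δ-1)) * ((MN δ K N : ℝ)/(N:ℝ)^(1-δ))
        / (1+2*aN β N))
      atTop (nhds ((K-0)*K/(1+2*0))) := by
    apply Tendsto.div ((tphi.sub tpsi).mul tphi)
      (tendsto_const_nhds.add (ta.const_mul 2)) (by norm_num)
  rw [show (K-0)*K/(1+2*0) = K*K by norm_num] at hrhs
  apply hrhs.congr'
  filter_upwards [eventually_ge_atTop 1] with N h1
  exact (comp2_id (by omega)).symm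

lemma tendsto_comp2' (hβ0 : 0 < β) (hδ0 : 0 < δ) (hδ1 : δ < 1) (hK0 : 0 < K) :
    Tendsto (fun N : ℕ => c2N β δ N * (((MN δ K N : ℝ)-1) * (MN δ K N : ℝ)/2) / TT β δ N)
      atTop (nhds (K*K)) := by
  have ta := tendsto_aN (β := β) hβ0
  have te := tendsto_eN (δ := δ) hδ0
  have tfac : Tendsto (fun N : ℕ => (1+2*eN δ N)*(1+2*aN β N)/(1+2*aN β N - eN δ N))
      atTop (nhds ((1+2*0)*(1+2*0)/(1+2*0-0))) := by
    apply Tendsto.div ((tendsto_const_nhds.add (te.const_mul 2)).mul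
      (tendsto_const_nhds.add (ta.const_mul 2)))
      ((tendsto_const_nhds.add (ta.const_mul 2)).sub te) (by norm_num)
  rw [show ((1:ℝ)+2*0)*(1+2*0)/(1+2*0-0) = 1 by norm_num] at tfac
  have h := (tendsto_comp2 (K := K) hβ0 hδ0 hδ1 hK0).mul tfac
  rw [mul_one] at h
  apply h.congr'
  filter_upwards [eventually_ge_atTop 1, ev_eN_lt (δ := δ) hδ0 (by norm_num : (0:ℝ) < 1/2)]
    with N h1 h2
  rw [c2N_eq (by omega) (le_of_lt h2)]
  ring

lemma tendsto_KP (hδ1 : δ < 1) (hK0 : 0 < K) :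
    Tendsto (fun N : ℕ => K * (N:ℝ)^(1-δ)) atTop atTop := by
  apply Tendsto.const_mul_atTop hK0
  exact (tendsto_rpow_atTop (by linarith)).comp tendsto_natCast_atTop_atTop

lemma eventually_MN_ge (hδ1 : δ < 1) (hK0 : 0 < K) (m : ℕ) :
    ∀ᶠ N : ℕ in atTop, m ≤ MN δ K N := by
  filter_upwards [(tendsto_KP (K := K) hδ1 hK0).eventually_ge_atTop (m:ℝ)] with N h
  exact Nat.le_floor h

lemma MN_le_N (hδ0 : 0 < δ) (hK0 : 0 ≤ K) (hK1 : K ≤ 1) {N : ℕ} (hN : 1 ≤ N) :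
    MN δ K N ≤ N := by
  have hNR : (1:ℝ) ≤ N := by exact_mod_cast hN
  have hP : (0:ℝ) < (N:ℝ)^(1-δ) := Real.rpow_pos_of_pos (by linarith) _
  have h1 : ((MN δ K N : ℝ)) ≤ K * (N:ℝ)^(1-δ) := Nat.floor_le (by positivity)
  have h2 : (N:ℝ)^(1-δ) ≤ (N:ℝ)^(1:ℝ) :=
    Real.rpow_le_rpow_of_exponent_le hNR (by linarith)
  have h3 : (N:ℝ)^(1:ℝ) = (N:ℝ) := Real.rpow_one _
  have h4 : K * (N:ℝ)^(1-δ) ≤ (N:ℝ)^(1-δ) := by nlinarith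
  have : ((MN δ K N : ℝ)) ≤ (N:ℝ) := le_trans h1 (le_trans h4 (le_trans h2 h3.le))
  exact_mod_cast this

lemma tendsto_comp3 (hβ0 : 0 < β) (hδ0 : 0 < δ) (hδ1 : δ < 1) (hK0 : 0 < K) (hK1 : K ≤ 1)
    (hγ : 0 < 1-β-2*δ) :
    Tendsto (fun N : ℕ => Real.log (MN δ K N) / TT β δ N) atTop (nhds 0) := by
  apply tendsto_of_tendsto_of_tendsto_of_le_of_le' tendsto_const_nhds
    (tendsto_logN_div_TT (β := β) (δ := δ) hγ)
  · filter_upwards [eventually_ge_atTop 1, eventually_MN_ge (K := K) hδ1 hK0 1] with N h1 hM1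
    have hT := TT_pos (β := β) (δ := δ) (by omega : 0 < N)
    have : (0:ℝ) ≤ Real.log (MN δ K N) :=
      Real.log_nonneg (by exact_mod_cast hM1)
    positivity
  · filter_upwards [eventually_ge_atTop 1, eventually_MN_ge (K := K) hδ1 hK0 1] with N h1 hM1
    have hT := TT_pos (β := β) (δ := δ) (by omega : 0 < N)
    have hMp : (0:ℝ) < (MN δ K N : ℝ) := by exact_mod_cast hM1
    gcongr
    exact MN_le_N hδ0 (le_of_lt hK0) hK1 h1


lemma ev_rpow_ge (hβ0 : 0 < β) (c : ℝ) : ∀ᶠ N : ℕ in atTop, c ≤ (N:ℝ)^β :=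
  (((tendsto_rpow_atTop hβ0).comp (tendsto_natCast_atTop_atTop (R := ℝ))).eventually_ge_atTop c)

lemma qr_le_rpow {N n : ℕ} (hN : 1 ≤ N) (hβ2 : 2 ≤ (N:ℝ)^β) (hn : (n:ℝ) ≤ N) :
    qr β N n ≤ (N:ℝ)^β := by
  have hNR : (0:ℝ) < N := by exact_mod_cast hN
  have hx1 : (n:ℝ)/(N:ℝ) ≤ 1 := by rw [div_le_one hNR]; exact hn
  have hx0 : 0 ≤ (n:ℝ)/(N:ℝ) := by positivity
  have hb : (0:ℝ) < (N:ℝ)^β := by linarith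
  have hinv : (N:ℝ)^(-β) = ((N:ℝ)^β)⁻¹ := Real.rpow_neg (le_of_lt hNR) β
  have h1 : 1 / (2 * (N:ℝ)^(-β)) = (N:ℝ)^β/2 := by
    rw [hinv]; field_simp
  unfold qr
  rw [h1]
  nlinarith

lemma tendsto_comp4 (hβ0 : 0 < β) (hδ0 : 0 < δ) (hδ1 : δ < 1) (hK0 : 0 < K) (hK1 : K ≤ 1)
    (hγ : 0 < 1-β-2*δ) :
    Tendsto (fun N : ℕ => Real.log ((MN δ K N : ℝ) * qr β N (MN δ K N)) / TT β δ N)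
      atTop (nhds 0) := by
  have hupper : Tendsto (fun N : ℕ => (1+β) * (Real.log N / TT β δ N)) atTop (nhds 0) := by
    simpa using (tendsto_logN_div_TT (β := β) (δ := δ) hγ).const_mul (1+β)
  apply tendsto_of_tendsto_of_tendsto_of_le_of_le' tendsto_const_nhds hupper
  · filter_upwards [eventually_ge_atTop 1, eventually_MN_ge (K := K) hδ1 hK0 1] with N h1 hM1
    have hNR : (0:ℝ) < N := by exact_mod_cast h1
    have hT := TT_pos (β := β) (δ := δ) (by omega : 0 < N)
    have hMR : (1:ℝ) ≤ (MN δ K N : ℝ) := by exact_mod_cast hM1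
    have hMN : (MN δ K N : ℝ) ≤ (N:ℝ) := by
      exact_mod_cast MN_le_N hδ0 (le_of_lt hK0) hK1 h1
    have hq : 1 ≤ qr β N (MN δ K N) := one_le_qr (by omega) hMN
    have : (0:ℝ) ≤ Real.log ((MN δ K N : ℝ) * qr β N (MN δ K N)) := by
      apply Real.log_nonneg
      nlinarith
    positivity
  · filter_upwards [eventually_ge_atTop 1, eventually_MN_ge (K := K) hδ1 hK0 1,
      ev_rpow_ge (β := β) hβ0 2] with N h1 hM1 hβ2
    have hNR : (0:ℝ) < N := by exact_mod_cast h1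
    have hNR1 : (1:ℝ) ≤ N := by exact_mod_cast h1
    have hT := TT_pos (β := β) (δ := δ) (by omega : 0 < N)
    have hMR : (1:ℝ) ≤ (MN δ K N : ℝ) := by exact_mod_cast hM1
    have hMN : (MN δ K N : ℝ) ≤ (N:ℝ) := by
      exact_mod_cast MN_le_N hδ0 (le_of_lt hK0) hK1 h1
    have hq : 1 ≤ qr β N (MN δ K N) := one_le_qr (by omega) hMN
    have hql : qr β N (MN δ K N) ≤ (N:ℝ)^β := qr_le_rpow h1 hβ2 hMN
    have hb : (0:ℝ) < (N:ℝ)^β := by linarith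
    have hlog : Real.log ((MN δ K N : ℝ) * qr β N (MN δ K N)) ≤ (1+β) * Real.log N := by
      calc Real.log ((MN δ K N : ℝ) * qr β N (MN δ K N))
          ≤ Real.log ((N:ℝ) * (N:ℝ)^β) := by
            apply Real.log_le_log (by nlinarith)
            apply mul_le_mul hMN hql (by linarith) (by linarith)
        _ = Real.log N + β * Real.log N := by
            rw [Real.log_mul (by linarith) (by linarith), Real.log_rpow hNR]
        _ = (1+β) * Real.log N := by ring
    calc Real.log ((MN δ K N : ℝ) * qr β N (MN δ K N)) / TT β δ N
        ≤ (1+β) * Real.log N / TT β δ N := by gcongr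
      _ = (1+β) * (Real.log N / TT β δ N) := by ring

lemma sum_lin (b c : ℝ) (m : ℕ) :
    ∑ k ∈ Finset.Icc 1 m, (b - c*(k:ℝ)) = m*b - c*((m:ℝ)*((m:ℝ)+1)/2) := by
  have h1 : ∑ k ∈ Finset.Icc 1 m, (b - c*(k:ℝ))
      = (∑ _k ∈ Finset.Icc 1 m, b) - c * ∑ k ∈ Finset.Icc 1 m, (k:ℝ) := by
    rw [Finset.mul_sum, ← Finset.sum_sub_distrib]
  rw [h1, sum_Icc_cast, Finset.sum_const, Nat.card_Icc, nsmul_eq_mul]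
  push_cast
  ring

end limits

section main
variable {β δ K : ℝ}

/-- In the exponential regime `ℰ`, for `0 < K ≤ 1`,
`Σ_{n=1}^{⌊K N^{1−δ}⌋} G_N(n,n)` is logarithmically equivalent to
`exp(K(2−K) N^{1−β−2δ})`. -/
theorem statement5 (β δ K : ℝ)
    (hβ0 : 0 < β) (hβ1 : β < 1)
    (hδ0 : 0 < δ) (hδ1 : δ < (1 - β)/2)
    (hK0 : 0 < K) (hK1 : K ≤ 1) :
    Tendsto (fun N : ℕ =>
        Real.log (∑ n ∈ Finset.Icc 1 ⌊K * (N:ℝ)^(1 - δ)⌋₊, G β δ N n n) /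
          (K * (2 - K) * (N:ℝ)^(1 - β - 2*δ)))
      atTop (nhds 1) := by
  have hδ1' : δ < 1 := by linarith
  have hγ : 0 < 1-β-2*δ := by linarith
  have hK0' : (0:ℝ) ≤ K := le_of_lt hK0
  set C := K*(2-K) with hC
  have hCpos : 0 < C := by rw [hC]; nlinarith
  have hval : 2*K - K*K = C := by rw [hC]; ring
  -- Tendsto of the upper bound
  have hUB : Tendsto (fun N : ℕ =>
      (Real.log (MN δ K N) + ((MN δ K N : ℝ)-1)*bN β δ N
        - cN β N*(((MN δ K N : ℝ)-1)*(MN δ K N : ℝ)/2)) / TT β δ N)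
      atTop (nhds (2*K - K*K)) := by
    have h := ((tendsto_comp3 (K := K) hβ0 hδ0 hδ1' hK0 hK1 hγ).add
      (tendsto_comp1 (K := K) hβ0 hδ0 hδ1' hK0)).sub
      (tendsto_comp2 (K := K) hβ0 hδ0 hδ1' hK0)
    rw [zero_add] at h
    apply h.congr
    intro N
    ring
  -- Tendsto of the lower bound
  have hLB : Tendsto (fun N : ℕ =>
      ((bN β δ N - (bN β δ N)^2)*((MN δ K N : ℝ)-1)
        - c2N β δ N*(((MN δ K N : ℝ)-1)*(MN δ K N : ℝ)/2)
        - Real.log ((MN δ K N : ℝ)*qr β N (MN δ K N))) / TT β δ N)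
      atTop (nhds (2*K - K*K)) := by
    have h1 : Tendsto (fun N : ℕ =>
        (1 - bN β δ N)*(((MN δ K N : ℝ)-1)*bN β δ N/TT β δ N)) atTop
        (nhds ((1-0)*(2*K))) :=
      (tendsto_const_nhds.sub (tendsto_bN (δ := δ) hβ0 hδ0)).mul
        (tendsto_comp1 (K := K) hβ0 hδ0 hδ1' hK0)
    rw [show ((1:ℝ)-0)*(2*K) = 2*K by norm_num] at h1
    have h := (h1.sub (tendsto_comp2' (K := K) hβ0 hδ0 hδ1' hK0)).sub
      (tendsto_comp4 (K := K) hβ0 hδ0 hδ1' hK0 hK1 hγ)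
    rw [sub_zero] at h
    apply h.congr
    intro N
    ring
  -- value rewrites
  have hUB' : Tendsto (fun N : ℕ =>
      (Real.log (MN δ K N) + ((MN δ K N : ℝ)-1)*bN β δ N
        - cN β N*(((MN δ K N : ℝ)-1)*(MN δ K N : ℝ)/2)) / (C * TT β δ N))
      atTop (nhds 1) := by
    have h := hUB.div_const C
    rw [hval, div_self (ne_of_gt hCpos)] at h
    apply h.congr
    intro N
    rw [div_div, mul_comm (TT β δ N) C]
  have hLB' : Tendsto (fun N : ℕ =>
      ((bN β δ N - (bN β δ N)^2)*((MN δ K N : ℝ)-1)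
        - c2N β δ N*(((MN δ K N : ℝ)-1)*(MN δ K N : ℝ)/2)
        - Real.log ((MN δ K N : ℝ)*qr β N (MN δ K N))) / (C * TT β δ N))
      atTop (nhds 1) := by
    have h := hLB.div_const C
    rw [hval, div_self (ne_of_gt hCpos)] at h
    apply h.congr
    intro N
    rw [div_div, mul_comm (TT β δ N) C]
  apply tendsto_of_tendsto_of_tendsto_of_le_of_le' hLB' hUB'
  -- lower bound eventually
  · filter_upwards [eventually_ge_atTop 2, ev_eN_lt (δ := δ) hδ0 (by norm_num : (0:ℝ) < 1/2),
      eventually_MN_ge (K := K) hδ1' hK0 1] with N hN2 he2' hM1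
    have hN0 : 0 < N := by omega
    have hN1 : 1 ≤ N := by omega
    have hNR : (0:ℝ) < N := by exact_mod_cast hN0
    have he2 : eN δ N ≤ 1/2 := le_of_lt he2'
    have hT := TT_pos (β := β) (δ := δ) hN0
    have hCT : 0 < C * TT β δ N := by positivity
    have hMR : (1:ℝ) ≤ (MN δ K N : ℝ) := by exact_mod_cast hM1
    have hMN : (MN δ K N : ℝ) ≤ (N:ℝ) := by
      exact_mod_cast MN_le_N hδ0 hK0' hK1 hN1
    have hq : 1 ≤ qr β N (MN δ K N) := one_le_qr hN0 hMN
    have hq0 : 0 < qr β N (MN δ K N) := by linarith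
    have hS_low := le_sum_G (β := β) hN0 he2 hK0' hK1 hM1
    have hexp_pos : 0 < Real.exp (∑ k ∈ Finset.Icc 1 (MN δ K N - 1),
        ((bN β δ N - (bN β δ N)^2) - c2N β δ N * k)) / ((MN δ K N : ℝ) * qr β N (MN δ K N)) := by
      positivity
    have hS_pos : 0 < ∑ n ∈ Finset.Icc 1 (MN δ K N), G β δ N n n :=
      lt_of_lt_of_le hexp_pos hS_low
    have hlogL : (bN β δ N - (bN β δ N)^2)*((MN δ K N : ℝ)-1)
        - c2N β δ N*(((MN δ K N : ℝ)-1)*(MN δ K N : ℝ)/2)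
        - Real.log ((MN δ K N : ℝ)*qr β N (MN δ K N))
        ≤ Real.log (∑ n ∈ Finset.Icc 1 (MN δ K N), G β δ N n n) := by
      have h1 := Real.log_le_log hexp_pos hS_low
      rw [Real.log_div (Real.exp_ne_zero _) (by positivity), Real.log_exp,
        sum_lin, Nat.cast_sub hM1] at h1
      have hfix : ((MN δ K N : ℝ) - (1:ℕ)) * ((MN δ K N : ℝ) - (1:ℕ) + 1)
          = ((MN δ K N : ℝ)-1) * (MN δ K N : ℝ) := by push_cast; ring
      calc (bN β δ N - (bN β δ N)^2)*((MN δ K N : ℝ)-1)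
            - c2N β δ N*(((MN δ K N : ℝ)-1)*(MN δ K N : ℝ)/2)
            - Real.log ((MN δ K N : ℝ)*qr β N (MN δ K N))
          = ((MN δ K N : ℝ) - (1:ℕ))*(bN β δ N - (bN β δ N)^2)
            - c2N β δ N*(((MN δ K N : ℝ) - (1:ℕ))*((MN δ K N : ℝ) - (1:ℕ) + 1)/2)
            - Real.log ((MN δ K N : ℝ)*qr β N (MN δ K N)) := by
            rw [hfix]; push_cast; ring
        _ ≤ Real.log (∑ n ∈ Finset.Icc 1 (MN δ K N), G β δ N n n) := by linarith [h1]
    have hgoal : ((bN β δ N - (bN β δ N)^2)*((MN δ K N : ℝ)-1)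
        - c2N β δ N*(((MN δ K N : ℝ)-1)*(MN δ K N : ℝ)/2)
        - Real.log ((MN δ K N : ℝ)*qr β N (MN δ K N))) / (C * TT β δ N)
        ≤ Real.log (∑ n ∈ Finset.Icc 1 (MN δ K N), G β δ N n n) / (C * TT β δ N) := by
      gcongr
    exact hgoal
  -- upper bound eventually
  · filter_upwards [eventually_ge_atTop 2, ev_eN_lt (δ := δ) hδ0 (by norm_num : (0:ℝ) < 1/2),
      eventually_MN_ge (K := K) hδ1' hK0 1] with N hN2 he2' hM1
    have hN0 : 0 < N := by omega
    have hN1 : 1 ≤ N := by omega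
    have hNR : (0:ℝ) < N := by exact_mod_cast hN0
    have he2 : eN δ N ≤ 1/2 := le_of_lt he2'
    have hT := TT_pos (β := β) (δ := δ) hN0
    have hCT : 0 < C * TT β δ N := by positivity
    have hMR : (1:ℝ) ≤ (MN δ K N : ℝ) := by exact_mod_cast hM1
    have hMN : (MN δ K N : ℝ) ≤ (N:ℝ) := by
      exact_mod_cast MN_le_N hδ0 hK0' hK1 hN1
    have hq : 1 ≤ qr β N (MN δ K N) := one_le_qr hN0 hMN
    have hq0 : 0 < qr β N (MN δ K N) := by linarith
    have hS_low := le_sum_G (β := β) hN0 he2 hK0' hK1 hM1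
    have hexp_pos : 0 < Real.exp (∑ k ∈ Finset.Icc 1 (MN δ K N - 1),
        ((bN β δ N - (bN β δ N)^2) - c2N β δ N * k)) / ((MN δ K N : ℝ) * qr β N (MN δ K N)) := by
      positivity
    have hS_pos : 0 < ∑ n ∈ Finset.Icc 1 (MN δ K N), G β δ N n n :=
      lt_of_lt_of_le hexp_pos hS_low
    have hS_up := sum_G_le (β := β) hN0 he2 hK0' hK1
    have hlogU : Real.log (∑ n ∈ Finset.Icc 1 (MN δ K N), G β δ N n n)
        ≤ Real.log (MN δ K N) + ((MN δ K N : ℝ)-1)*bN β δ N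
          - cN β N*(((MN δ K N : ℝ)-1)*(MN δ K N : ℝ)/2) := by
      have h1 := Real.log_le_log hS_pos hS_up
      rw [Real.log_mul (by positivity) (Real.exp_ne_zero _), Real.log_exp,
        sum_lin, Nat.cast_sub hM1] at h1
      have hfix : ((MN δ K N : ℝ) - (1:ℕ)) * ((MN δ K N : ℝ) - (1:ℕ) + 1)
          = ((MN δ K N : ℝ)-1) * (MN δ K N : ℝ) := by push_cast; ring
      calc Real.log (∑ n ∈ Finset.Icc 1 (MN δ K N), G β δ N n n)
          ≤ Real.log (MN δ K N) + (((MN δ K N : ℝ) - (1:ℕ))*bN β δ N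
              - cN β N*(((MN δ K N : ℝ) - (1:ℕ))*((MN δ K N : ℝ) - (1:ℕ) + 1)/2)) := h1
        _ = Real.log (MN δ K N) + ((MN δ K N : ℝ)-1)*bN β δ N
              - cN β N*(((MN δ K N : ℝ)-1)*(MN δ K N : ℝ)/2) := by
            rw [hfix]; push_cast; ring
    have hgoal : Real.log (∑ n ∈ Finset.Icc 1 (MN δ K N), G β δ N n n) / (C * TT β δ N)
        ≤ (Real.log (MN δ K N) + ((MN δ K N : ℝ)-1)*bN β δ N
          - cN β N*(((MN δ K N : ℝ)-1)*(MN δ K N : ℝ)/2)) / (C * TT β δ N) := by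
      gcongr
    exact hgoal
end main

end MullerRatchet5
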